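/- In the setting of the context, for each u ∈ A* that is double (as an element of T_{n(u)}), one has ∑_{v∈A} contr(u,v) ≥ (149/50)·charge(u,n(u)). -/

import Mathlib

open Finset

open scoped Classical

variable {V : Type*}

noncomputable section

/-- Neighborhood of `U` in `W`: vertices of `W` that lie in `U` or are adjacent to some
vertex of `U`. -/
def nbhd (G : SimpleGraph V) (U W : Finset V) : Finset V :=
  W.filter (fun x => x ∈ U ∨ ∃ u ∈ U, G.Adj u x)

/-- Neighborhood of a single vertex `u` in `W`. -/
def nbhd1 (G : SimpleGraph V) (u : V) (W : Finset V) : Finset V :=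
  nbhd G {u} W

/-- Total weight of a finite set of vertices. -/
def wsum (w : V → ℝ) (U : Finset V) : ℝ := ∑ x ∈ U, w x

/-- Total squared weight of a finite set of vertices. -/
def wsq (w : V → ℝ) (U : Finset V) : ℝ := ∑ x ∈ U, (w x) ^ 2

/-- A finite set of vertices is independent. -/
def IsIndep (G : SimpleGraph V) (S : Finset V) : Prop :=
  ∀ a ∈ S, ∀ b ∈ S, a ≠ b → ¬ G.Adj a b

/-- `G` is `d`-claw free: every independent subset of the neighborhood of any vertex has
size at most `d - 1`. -/
def ClawFree (G : SimpleGraph V) (d : ℕ) : Prop :=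
  ∀ v : V, ∀ S : Finset V, (∀ x ∈ S, G.Adj v x) → IsIndep G S → S.card ≤ d - 1

/-- `X` is a local improvement of `w²(A)`. -/
def LocalImprovement (G : SimpleGraph V) (d : ℕ) (w : V → ℝ) (A X : Finset V) : Prop :=
  IsIndep G X ∧ X.card ≤ (d - 1) ^ 2 + (d - 1) ∧ wsq w (nbhd G X A) < wsq w X

/-- No claw improves `w²(A)`: `w²(T) ≤ w²(N(T,A))` for every independent set `T` that is a
singleton or whose vertices are all adjacent to a common vertex. -/
def NoClawImproves (G : SimpleGraph V) (w : V → ℝ) (A : Finset V) : Prop :=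
  ∀ T : Finset V, IsIndep G T → (T.card = 1 ∨ ∃ v : V, ∀ x ∈ T, G.Adj v x) →
    wsq w T ≤ wsq w (nbhd G T A)

/-- The charge map, relative to a choice `n` of heaviest neighbors. -/
def charge (G : SimpleGraph V) (w : V → ℝ) (A : Finset V) (n : V → V) (u v : V) : ℝ :=
  if v = n u then w u - wsum w (nbhd1 G u A) / 2 else 0

/-- `u ∈ T_v` is single (with `√ε = 1/2304`). -/
def IsSingle (G : SimpleGraph V) (w : V → ℝ) (A : Finset V) (u v : V) : Prop :=
  (1 - 1 / 2304 : ℝ) ≤ w u / w v ∧ w u / w v ≤ 1 + 1 / 2304 ∧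
  wsum w (nbhd1 G u A) ≤ (1 + 1 / 2304) * w v

/-- `u ∈ T_v` is double (with `√ε = 1/2304`). -/
def IsDouble (G : SimpleGraph V) (w : V → ℝ) (A : Finset V) (u v : V) : Prop :=
  2 ≤ (nbhd1 G u A).card ∧
  ∃ v₂ ∈ (nbhd1 G u A).erase v, (∀ x ∈ (nbhd1 G u A).erase v, w x ≤ w v₂) ∧
    (1 - 1 / 2304 : ℝ) ≤ w u / w v ∧ w u / w v ≤ 1 + 1 / 2304 ∧
    (1 - 1 / 2304 : ℝ) ≤ w v₂ / w v ∧ w v₂ / w v ≤ 1 ∧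
    (2 - 1 / 2304) * w v ≤ wsum w (nbhd1 G u A) ∧ wsum w (nbhd1 G u A) < 2 * w u

/-- The contribution map. -/
def contr (G : SimpleGraph V) (w : V → ℝ) (A : Finset V) (u v : V) : ℝ :=
  if v ∈ nbhd1 G u A then max 0 (((w u) ^ 2 - wsq w ((nbhd1 G u A).erase v)) / w v) else 0

lemma stepA (W1 b c r : ℝ) (hW1 : 0 < W1) (hbn : 0 ≤ b) (hb : b ≤ (1/2304) * W1)
    (hr : 0 ≤ r) (hr3 : r ≤ 3 * (1/2304) * W1) (hc : 0 ≤ c) :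
    (149/50) * c * (W1 * (W1 - b)) ≤
      (W1 + (W1 - b)) * ((9/10) * (((W1 + c + r/2 - b/2))^2 - W1^2 - (W1-b)^2 - r^2)
        - (1/10) * (W1-b)^2) + W1^2 * (W1-b) + W1 * (W1-b)^2 := by
  nlinarith [mul_nonneg (mul_nonneg (by linarith : (0:ℝ) ≤ (1/2304)*W1 - b) hbn) hW1.le,
    mul_nonneg (mul_nonneg (by linarith : (0:ℝ) ≤ (1/2304)*W1 - b) hc) hW1.le,
    mul_nonneg (mul_nonneg (by linarith : (0:ℝ) ≤ 3*(1/2304)*W1 - r) hr) hW1.le,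
    mul_nonneg (mul_nonneg (by linarith : (0:ℝ) ≤ (1/2304)*W1 - b) hr) hW1.le,
    mul_nonneg (by linarith : (0:ℝ) ≤ (1/2304)*W1 - b) (mul_nonneg hc hc),
    mul_nonneg (mul_nonneg (by linarith : (0:ℝ) ≤ (1/2304)*W1 - b) hc) hr,
    mul_nonneg (mul_nonneg hbn hbn) hbn,
    mul_nonneg (mul_nonneg hbn hbn) hr,
    mul_nonneg (mul_nonneg hbn hbn) hc,
    mul_nonneg (mul_nonneg hc hc) hW1.le,
    mul_nonneg (mul_nonneg hc hr) hW1.le,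
    mul_nonneg (mul_nonneg hbn hW1.le) hW1.le,
    mul_nonneg (mul_nonneg hc hW1.le) hW1.le,
    mul_nonneg (mul_nonneg hr hW1.le) hW1.le,
    mul_nonneg (mul_nonneg hbn hr) hr]

lemma caseA (W1 W2 U Q ρ c : ℝ) (hW1 : 0 < W1) (hW2 : 0 < W2)
    (hUb1 : (1 - 1/2304) * W1 ≤ U) (hUb2 : U ≤ (1 + 1/2304) * W1)
    (hW2b1 : (1 - 1/2304) * W1 ≤ W2) (hW2b2 : W2 ≤ W1)
    (hρ : 0 ≤ ρ) (hc : 0 < c) (hcdef : c = U - (W1 + W2 + ρ) / 2)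
    (hQ : Q ≤ W1^2 + W2^2 + ρ^2) (hx2 : 0 ≤ U^2 - (Q - W2^2)) :
    (149/50) * c * (W1 * W2) ≤ (U^2 - (Q - W1^2)) * W2 + (U^2 - (Q - W2^2)) * W1 := by
  have hbn : (0:ℝ) ≤ W1 - W2 := by linarith
  have hb : W1 - W2 ≤ (1/2304) * W1 := by linarith
  have hr3 : ρ ≤ 3 * (1/2304) * W1 := by linarith
  have key := stepA W1 (W1 - W2) c ρ hW1 hbn hb hρ hr3 hc.le
  have h2 : W1 - (W1 - W2) = W2 := by ring
  rw [h2] at key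
  have hUeq : W1 + c + ρ/2 - (W1 - W2)/2 = U := by linarith
  rw [hUeq] at key
  have hmul : (W1 + W2) * ((9/10) * (U^2 - W1^2 - W2^2 - ρ^2) - (1/10) * W2^2)
      ≤ (W1 + W2) * (U^2 - Q) := by
    apply mul_le_mul_of_nonneg_left _ (by linarith)
    linarith
  have expand : (U^2 - (Q - W1^2)) * W2 + (U^2 - (Q - W2^2)) * W1
      = (W1 + W2) * (U^2 - Q) + W1^2 * W2 + W1 * W2^2 := by ring
  rw [expand]
  linarith

lemma caseB (W1 W2 U Q ρ c : ℝ) (hW1 : 0 < W1) (hW2 : 0 < W2)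
    (hUb1 : (1 - 1/2304) * W1 ≤ U) (hUb2 : U ≤ (1 + 1/2304) * W1)
    (hW2b1 : (1 - 1/2304) * W1 ≤ W2) (hW2b2 : W2 ≤ W1)
    (hρ : 0 ≤ ρ) (hc : 0 < c) (hcdef : c = U - (W1 + W2 + ρ) / 2)
    (hQ : Q ≤ W1^2 + W2^2 + ρ^2) (hx2 : U^2 - (Q - W2^2) ≤ 0) :
    (149/50) * c * W1 ≤ U^2 - (Q - W1^2) := by
  nlinarith [sq_nonneg ρ, sq_nonneg (U - W1), sq_nonneg (U - W2), mul_pos hW1 hW2,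
    mul_pos hc hW1, sq_nonneg (W1 - W2), mul_nonneg hρ hW1.le, mul_nonneg hρ hρ]

theorem stmt12 [Fintype V] (G : SimpleGraph V) (w : V → ℝ) (hw : ∀ v, 0 < w v)
    (Astar A : Finset V) (hAstarIndep : IsIndep G Astar)
    (hAIndep : IsIndep G A) (hAmax : ∀ v : V, (nbhd1 G v A).Nonempty)
    (n : V → V)
    (hn : ∀ u ∈ Astar, n u ∈ nbhd1 G u A ∧ ∀ x ∈ nbhd1 G u A, w x ≤ w (n u))
    (u : V) (hu : u ∈ Astar) (hchg : 0 < charge G w A n u (n u))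
    (hDouble : IsDouble G w A u (n u)) :
    (149 / 50 : ℝ) * charge G w A n u (n u) ≤ ∑ v ∈ A, contr G w A u v := by
  classical
  set N := nbhd1 G u A with hN
  obtain ⟨hv₁N, hv₁max⟩ := hn u hu
  obtain ⟨hcard, v₂, hv₂e, hv₂max, h1, h2, h3, h4, h5, h6⟩ := hDouble
  set v₁ := n u with hv₁
  have hv₂N : v₂ ∈ N := mem_of_mem_erase hv₂e
  have hne : v₂ ≠ v₁ := ne_of_mem_erase hv₂e
  have hNA : N ⊆ A := filter_subset _ _
  have hW1 : 0 < w v₁ := hw v₁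
  have hW2 : 0 < w v₂ := hw v₂
  -- weight bounds
  have hUb1 : (1 - 1/2304) * w v₁ ≤ w u := by
    rw [div_le_iff₀ hW1] at h2; rw [le_div_iff₀ hW1] at h1; linarith
  have hUb2 : w u ≤ (1 + 1/2304) * w v₁ := by
    rw [div_le_iff₀ hW1] at h2; linarith
  have hW2b1 : (1 - 1/2304) * w v₁ ≤ w v₂ := by
    rw [le_div_iff₀ hW1] at h3; linarith
  have hW2b2 : w v₂ ≤ w v₁ := hv₁max v₂ hv₂N
  -- charge value
  have hchg' : charge G w A n u (n u) = w u - wsum w N / 2 := by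
    simp [charge, hN]
  rw [hchg'] at hchg ⊢
  set c := w u - wsum w N / 2 with hcval
  -- sums decomposition
  have e1 : wsum w (N.erase v₁) + w v₁ = wsum w N := Finset.sum_erase_add _ _ hv₁N
  have e2 : wsum w ((N.erase v₁).erase v₂) + w v₂ = wsum w (N.erase v₁) :=
    Finset.sum_erase_add _ _ hv₂e
  have q1 : wsq w (N.erase v₁) + (w v₁)^2 = wsq w N := Finset.sum_erase_add _ _ hv₁N
  have q2 : wsq w ((N.erase v₁).erase v₂) + (w v₂)^2 = wsq w (N.erase v₁) :=
    Finset.sum_erase_add _ _ hv₂e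
  set R := (N.erase v₁).erase v₂ with hR
  set ρ := wsum w R with hρdef
  have hρ : 0 ≤ ρ := Finset.sum_nonneg fun x _ => (hw x).le
  -- wsq R ≤ ρ^2
  have hsqR : wsq w R ≤ ρ^2 := by
    have hle : ∀ x ∈ R, (w x)^2 ≤ w x * ρ := by
      intro x hx
      have h1' : w x ≤ ρ := Finset.single_le_sum (fun y _ => (hw y).le) hx
      nlinarith [hw x]
    calc wsq w R ≤ ∑ x ∈ R, w x * ρ := Finset.sum_le_sum hle
      _ = ρ^2 := by rw [← Finset.sum_mul]; change wsum w R * ρ = _; rw [← hρdef]; ring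
  have hQ : wsq w N ≤ (w v₁)^2 + (w v₂)^2 + ρ^2 := by
    have : wsq w N = wsq w R + (w v₁)^2 + (w v₂)^2 := by linarith
    linarith
  have hcdef : c = w u - (w v₁ + w v₂ + ρ) / 2 := by
    have : wsum w N = w v₁ + w v₂ + ρ := by linarith
    rw [hcval, this]
  -- lower bound sum by two terms
  have hpairA : ({v₁, v₂} : Finset V) ⊆ A := by
    intro x hx
    rcases Finset.mem_insert.1 hx with rfl | hx
    · exact hNA hv₁N
    · exact hNA (Finset.mem_singleton.1 hx ▸ hv₂N)
  have hnonneg : ∀ v ∈ A, 0 ≤ contr G w A u v := by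
    intro v _
    unfold contr
    split
    · exact le_max_left _ _
    · exact le_refl _
  have hsum : ∑ v ∈ ({v₁, v₂} : Finset V), contr G w A u v ≤ ∑ v ∈ A, contr G w A u v :=
    Finset.sum_le_sum_of_subset_of_nonneg hpairA (fun i hi _ => hnonneg i hi)
  have hpair : ∑ v ∈ ({v₁, v₂} : Finset V), contr G w A u v
      = contr G w A u v₁ + contr G w A u v₂ := Finset.sum_pair hne.symm
  have hc1 : contr G w A u v₁ = max 0 (((w u)^2 - wsq w (N.erase v₁)) / w v₁) := by
    unfold contr; rw [if_pos hv₁N]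
  have hc2 : contr G w A u v₂ = max 0 (((w u)^2 - wsq w (N.erase v₂)) / w v₂) := by
    unfold contr; rw [if_pos hv₂N]
  -- wsq of erases
  have hq1 : wsq w (N.erase v₁) = wsq w N - (w v₁)^2 := by linarith
  have hq2 : wsq w (N.erase v₂) = wsq w N - (w v₂)^2 := by
    have := Finset.sum_erase_add N (fun x => (w x)^2) hv₂N
    have h : wsq w (N.erase v₂) + (w v₂)^2 = wsq w N := this
    linarith
  set Q := wsq w N with hQdef
  set U := w u with hUdef
  set W1 := w v₁ with hW1def
  set W2 := w v₂ with hW2def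
  rcases le_or_gt (U^2 - (Q - W2^2)) 0 with hx2 | hx2
  · -- case B: second term dropped
    have hkey := caseB W1 W2 U Q ρ c hW1 hW2 hUb1 hUb2 hW2b1 hW2b2 hρ hchg hcdef hQ hx2
    have hb1 : (149/50 : ℝ) * c ≤ (U^2 - (Q - W1^2)) / W1 := by
      rw [le_div_iff₀ hW1]; linarith
    have : (149/50 : ℝ) * c ≤ contr G w A u v₁ := by
      rw [hc1, hq1]
      exact le_trans hb1 (le_max_right _ _)
    have h2n : 0 ≤ contr G w A u v₂ := hnonneg v₂ (hNA hv₂N)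
    linarith [hsum, hpair.symm ▸ hsum]
  · -- case A
    have hkey := caseA W1 W2 U Q ρ c hW1 hW2 hUb1 hUb2 hW2b1 hW2b2 hρ hchg hcdef hQ hx2.le
    have hb1 : (149/50 : ℝ) * c ≤ (U^2 - (Q - W1^2)) / W1 + (U^2 - (Q - W2^2)) / W2 := by
      rw [div_add_div _ _ (ne_of_gt hW1) (ne_of_gt hW2), le_div_iff₀ (mul_pos hW1 hW2)]
      calc (149/50 : ℝ) * c * (W1 * W2) ≤ (U^2 - (Q - W1^2)) * W2 + (U^2 - (Q - W2^2)) * W1 := hkey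
        _ = (U^2 - (Q - W1^2)) * W2 + W1 * (U^2 - (Q - W2^2)) := by ring
    have hm1 : (U^2 - (Q - W1^2)) / W1 ≤ contr G w A u v₁ := by
      rw [hc1, hq1]; exact le_max_right _ _
    have hm2 : (U^2 - (Q - W2^2)) / W2 ≤ contr G w A u v₂ := by
      rw [hc2, hq2]; exact le_max_right _ _
    linarith [hsum, hpair.symm ▸ hsum]

end
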